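/- Let S be a compound Poisson random variable: S = T_1 + ... + T_N where N ~ Poisson(lambda), lambda > 0, and (T_i) are i.i.d. exponential with mean 1, independent of N. Then for every theta > 1, P[S >= theta * lambda] <= exp(-lambda * (sqrt(theta) - 1)^2). -/

import Mathlib

open MeasureTheory ProbabilityTheory
open scoped ENNReal

/-- Upper-deviation bound for a compound Poisson sum of unit-mean exponentials: if
`N ~ Poisson(lam)` and `(T i)` are i.i.d. exponential with mean `1`, all jointly
independent, and `S = T 0 + ⋯ + T (N-1)`, then for every `θ > 1`,
`P[S ≥ θ lam] ≤ exp(-lam (√θ - 1)²)`. -/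
theorem compound_poisson_upper_tail {Ω : Type*} [MeasurableSpace Ω] (μ : Measure Ω)
    [IsProbabilityMeasure μ] (lam : ℝ) (hlam : 0 < lam)
    (N : Ω → ℕ) (T : ℕ → Ω → ℝ) (hNm : Measurable N) (hTm : ∀ i, Measurable (T i))
    (hN : ∀ n : ℕ, μ {ω | N ω = n} =
      ENNReal.ofReal (Real.exp (-lam) * lam ^ n / (Nat.factorial n)))
    (hT : ∀ i, ∀ t : ℝ, 0 ≤ t → μ {ω | T i ω ≤ t} = ENNReal.ofReal (1 - Real.exp (-t)))
    (hTiid : iIndepFun T μ)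
    (hNT : IndepFun N (fun ω i => T i ω) μ)
    (θ : ℝ) (hθ : 1 < θ) :
    μ {ω | θ * lam ≤ ∑ i ∈ Finset.range (N ω), T i ω} ≤
      ENNReal.ofReal (Real.exp (-lam * (Real.sqrt θ - 1) ^ 2)) := by
  classical
  have hθ0 : (0:ℝ) < θ := lt_trans one_pos hθ
  set s : ℝ := Real.sqrt θ with hs_def
  have hs1 : 1 < s := by
    have := Real.sqrt_lt_sqrt (by norm_num) hθ
    simpa using this
  have hs0 : 0 < s := lt_trans one_pos hs1
  have hss : s * s = θ := Real.mul_self_sqrt hθ0.le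
  set a : ℝ := 1 - s⁻¹ with ha_def
  have ha0 : 0 < a := by
    have : s⁻¹ < 1 := inv_lt_one_of_one_lt₀ hs1
    simp [ha_def]; linarith
  have ha1 : a < 1 := by
    have : 0 < s⁻¹ := inv_pos.2 hs0
    simp [ha_def]; linarith
  have h1a : 1 - a = s⁻¹ := by simp [ha_def]
  have h1a0 : 0 < 1 - a := by rw [h1a]; exact inv_pos.2 hs0
  -- the law of each T i is the exponential measure with rate 1
  have hT0 : ∀ i, ∀ t : ℝ, t < 0 → μ {ω | T i ω ≤ t} = 0 := by
    intro i t ht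
    refine le_antisymm ?_ zero_le
    have h0 := hT i 0 le_rfl
    simp only [neg_zero, Real.exp_zero, sub_self, ENNReal.ofReal_zero] at h0
    calc μ {ω | T i ω ≤ t} ≤ μ {ω | T i ω ≤ 0} :=
          measure_mono (fun ω h => le_trans h ht.le)
      _ = 0 := h0
  have hmap : ∀ i, μ.map (T i) = expMeasure 1 := by
    intro i
    have hprob : IsProbabilityMeasure (expMeasure 1) := isProbabilityMeasure_expMeasure one_pos
    have : IsProbabilityMeasure (μ.map (T i)) := Measure.isProbabilityMeasure_map (hTm i).aemeasurable
    refine MeasureTheory.Measure.ext_of_Iic _ _ (fun t => ?_)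
    rw [Measure.map_apply (hTm i) measurableSet_Iic]
    have hrhs : expMeasure 1 (Set.Iic t)
        = ENNReal.ofReal (if 0 ≤ t then 1 - Real.exp (-t) else 0) := by
      rw [← ofReal_cdf (expMeasure 1) t]
      congr 1
      rw [cdf_expMeasure_eq one_pos t]
      simp
    rcases le_or_gt 0 t with h | h
    · rw [show (T i) ⁻¹' Set.Iic t = {ω | T i ω ≤ t} from rfl, hT i t h, hrhs, if_pos h]
    · rw [show (T i) ⁻¹' Set.Iic t = {ω | T i ω ≤ t} from rfl, hT0 i t h, hrhs,
        if_neg (not_le.2 h), ENNReal.ofReal_zero]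
  -- measurability helpers
  have hgm : Measurable fun x : ℝ => ENNReal.ofReal (Real.exp (a * x)) :=
    ENNReal.measurable_ofReal.comp (Real.measurable_exp.comp (measurable_const.mul measurable_id))
  have hSm : ∀ n, Measurable (fun ω => ∑ i ∈ Finset.range n, T i ω) := fun n =>
    Finset.measurable_sum _ (fun i _ => hTm i)
  -- L1: MGF of an exponential at a
  have hL1 : ∀ i, ∫⁻ ω, ENNReal.ofReal (Real.exp (a * T i ω)) ∂μ = ENNReal.ofReal s := by
    intro i
    rw [← lintegral_map hgm (hTm i), hmap i, expMeasure, gammaMeasure,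
      lintegral_withDensity_eq_lintegral_mul _
        (show Measurable (gammaPDF 1 1) from (measurable_gammaPDFReal 1 1).ennreal_ofReal) hgm]
    have key : ∀ x : ℝ, (gammaPDF 1 1 * fun x => ENNReal.ofReal (Real.exp (a * x))) x
        = ENNReal.ofReal s * exponentialPDF (1 - a) x := by
      intro x
      rcases le_or_gt 0 x with hx | hx
      · show gammaPDF 1 1 x * ENNReal.ofReal (Real.exp (a * x)) = _
        rw [show gammaPDF 1 1 x = exponentialPDF 1 x from rfl,
          exponentialPDF_of_nonneg hx, exponentialPDF_of_nonneg hx,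
          ← ENNReal.ofReal_mul (by positivity), ← ENNReal.ofReal_mul hs0.le]
        congr 1
        have h2 : s * (1 - a) = 1 := by rw [h1a]; field_simp
        rw [one_mul, ← Real.exp_add, ← mul_assoc, h2, one_mul]
        ring_nf
      · show gammaPDF 1 1 x * ENNReal.ofReal (Real.exp (a * x)) = _
        rw [show gammaPDF 1 1 x = exponentialPDF 1 x from rfl,
          exponentialPDF_of_neg hx, exponentialPDF_of_neg hx, zero_mul, mul_zero]
    rw [lintegral_congr key, lintegral_const_mul _
        (show Measurable (exponentialPDF (1 - a)) from
          (measurable_exponentialPDFReal (1 - a)).ennreal_ofReal),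
      lintegral_exponentialPDF_eq_one h1a0, mul_one]
  -- L2: MGF of a sum of n of them
  have hL2 : ∀ n, ∫⁻ ω, ENNReal.ofReal (Real.exp (a * ∑ i ∈ Finset.range n, T i ω)) ∂μ
      = (ENNReal.ofReal s) ^ n := by
    intro n
    induction n with
    | zero => simp
    | succ n ih =>
      have hind : IndepFun (fun ω => ∑ i ∈ Finset.range n, T i ω) (T n) μ := by
        have h := hTiid.indepFun_sum_range_succ hTm n
        have he : (∑ j ∈ Finset.range n, T j) = fun ω => ∑ i ∈ Finset.range n, T i ω := by
          funext ω; simp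
        rwa [he] at h
      have hind2 : IndepFun
          (fun ω => ENNReal.ofReal (Real.exp (a * ∑ i ∈ Finset.range n, T i ω)))
          (fun ω => ENNReal.ofReal (Real.exp (a * T n ω))) μ := hind.comp hgm hgm
      have heq : ∀ ω : Ω, ENNReal.ofReal (Real.exp (a * ∑ i ∈ Finset.range (n+1), T i ω))
          = ENNReal.ofReal (Real.exp (a * ∑ i ∈ Finset.range n, T i ω))
            * ENNReal.ofReal (Real.exp (a * T n ω)) := by
        intro ω
        rw [Finset.sum_range_succ, mul_add, Real.exp_add,
          ENNReal.ofReal_mul (Real.exp_nonneg _)]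
      calc ∫⁻ ω, ENNReal.ofReal (Real.exp (a * ∑ i ∈ Finset.range (n+1), T i ω)) ∂μ
          = ∫⁻ ω, ENNReal.ofReal (Real.exp (a * ∑ i ∈ Finset.range n, T i ω))
            * ENNReal.ofReal (Real.exp (a * T n ω)) ∂μ := lintegral_congr heq
        _ = (∫⁻ ω, ENNReal.ofReal (Real.exp (a * ∑ i ∈ Finset.range n, T i ω)) ∂μ)
            * ∫⁻ ω, ENNReal.ofReal (Real.exp (a * T n ω)) ∂μ :=
            lintegral_mul_eq_lintegral_mul_lintegral_of_indepFun''
              (hgm.comp (hSm n)).aemeasurable (hgm.comp (hTm n)).aemeasurable hind2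
        _ = (ENNReal.ofReal s) ^ n * ENNReal.ofReal s := by rw [ih, hL1 n]
        _ = (ENNReal.ofReal s) ^ (n+1) := (pow_succ _ _).symm
  -- L3: factorization over {N = n}
  have hL3 : ∀ n, ∫⁻ ω in {ω | N ω = n},
      ENNReal.ofReal (Real.exp (a * ∑ i ∈ Finset.range n, T i ω)) ∂μ
      = μ {ω | N ω = n} * (ENNReal.ofReal s) ^ n := by
    intro n
    have hNset : MeasurableSet {ω | N ω = n} := hNm (measurableSet_singleton n)
    have hφ : Measurable (fun k : ℕ => ({n} : Set ℕ).indicator (fun _ => (1:ℝ≥0∞)) k) :=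
      measurable_from_top
    have hψ : Measurable (fun t : ℕ → ℝ =>
        ENNReal.ofReal (Real.exp (a * ∑ i ∈ Finset.range n, t i))) :=
      hgm.comp (Finset.measurable_sum _ (fun i _ => measurable_pi_apply i))
    have hTtuple : Measurable (fun ω => fun i => T i ω) := measurable_pi_lambda _ hTm
    have hind : IndepFun
        (fun ω => ({n} : Set ℕ).indicator (fun _ => (1:ℝ≥0∞)) (N ω))
        (fun ω => ENNReal.ofReal (Real.exp (a * ∑ i ∈ Finset.range n, T i ω))) μ :=
      hNT.comp hφ hψ
    have hmul := lintegral_mul_eq_lintegral_mul_lintegral_of_indepFun''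
      (hφ.comp hNm).aemeasurable (hgm.comp (hSm n)).aemeasurable hind
    simp only [Function.comp_apply] at hmul
    have hindic : (fun ω => ({n} : Set ℕ).indicator (fun _ => (1:ℝ≥0∞)) (N ω)
          * ENNReal.ofReal (Real.exp (a * ∑ i ∈ Finset.range n, T i ω)))
        = Set.indicator {ω | N ω = n}
          (fun ω => ENNReal.ofReal (Real.exp (a * ∑ i ∈ Finset.range n, T i ω))) := by
      funext ω
      by_cases h : N ω = n <;> simp [Set.indicator, h]
    have hindic1 : (fun ω => ({n} : Set ℕ).indicator (fun _ => (1:ℝ≥0∞)) (N ω))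
        = Set.indicator {ω | N ω = n} (fun _ => (1:ℝ≥0∞)) := by
      funext ω
      by_cases h : N ω = n <;> simp [Set.indicator, h]
    rw [← lintegral_indicator hNset, ← hindic, hmul, hindic1, hL2 n,
      lintegral_indicator hNset, setLIntegral_one]
  -- decompose the event over the value of N
  have hAeq : {ω | θ * lam ≤ ∑ i ∈ Finset.range (N ω), T i ω}
      = ⋃ n, ({ω | N ω = n} ∩ {ω | θ * lam ≤ ∑ i ∈ Finset.range n, T i ω}) := by
    ext ω
    simp only [Set.mem_setOf_eq, Set.mem_iUnion, Set.mem_inter_iff]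
    exact ⟨fun h => ⟨N ω, rfl, h⟩, fun ⟨n, hn, h⟩ => by rwa [hn]⟩
  have hAn_meas : ∀ n, MeasurableSet
      ({ω | N ω = n} ∩ {ω | θ * lam ≤ ∑ i ∈ Finset.range n, T i ω}) := fun n =>
    (hNm (measurableSet_singleton n)).inter (measurableSet_le measurable_const (hSm n))
  have hdisj : Pairwise (Function.onFun Disjoint
      (fun n => {ω | N ω = n} ∩ {ω | θ * lam ≤ ∑ i ∈ Finset.range n, T i ω})) := by
    intro m n hmn
    refine Set.disjoint_left.2 ?_
    rintro ω ⟨h1, -⟩ ⟨h2, -⟩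
    exact hmn (h1.symm.trans h2)
  -- Chernoff bound on each piece
  have key : ∀ n, μ ({ω | N ω = n} ∩ {ω | θ * lam ≤ ∑ i ∈ Finset.range n, T i ω})
      ≤ ENNReal.ofReal (Real.exp (-(a * (θ * lam))))
        * (μ {ω | N ω = n} * (ENNReal.ofReal s) ^ n) := by
    intro n
    set A := {ω | N ω = n} ∩ {ω | θ * lam ≤ ∑ i ∈ Finset.range n, T i ω} with hA
    have h1 : ENNReal.ofReal (Real.exp (a * (θ * lam))) * μ A
        ≤ μ {ω | N ω = n} * (ENNReal.ofReal s) ^ n := by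
      calc ENNReal.ofReal (Real.exp (a * (θ * lam))) * μ A
          = ∫⁻ _ω in A, ENNReal.ofReal (Real.exp (a * (θ * lam))) ∂μ :=
            (setLIntegral_const A _).symm
        _ ≤ ∫⁻ ω in A, ENNReal.ofReal (Real.exp (a * ∑ i ∈ Finset.range n, T i ω)) ∂μ := by
            refine setLIntegral_mono (hgm.comp (hSm n)) (fun ω hω => ?_)
            have hω2 : θ * lam ≤ ∑ i ∈ Finset.range n, T i ω := hω.2
            exact ENNReal.ofReal_le_ofReal (Real.exp_le_exp.2
              (mul_le_mul_of_nonneg_left hω2 ha0.le))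
        _ ≤ ∫⁻ ω in {ω | N ω = n},
              ENNReal.ofReal (Real.exp (a * ∑ i ∈ Finset.range n, T i ω)) ∂μ :=
            lintegral_mono' (Measure.restrict_mono Set.inter_subset_left le_rfl) le_rfl
        _ = μ {ω | N ω = n} * (ENNReal.ofReal s) ^ n := hL3 n
    have h2 := mul_le_mul_right h1 (ENNReal.ofReal (Real.exp (-(a * (θ * lam)))))
    rwa [← mul_assoc, ← ENNReal.ofReal_mul (Real.exp_nonneg _), ← Real.exp_add,
      neg_add_cancel, Real.exp_zero, ENNReal.ofReal_one, one_mul] at h2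
  -- sum up
  rw [hAeq, measure_iUnion hdisj hAn_meas]
  have hb0 : (0:ℝ) < lam * s := mul_pos hlam hs0
  calc ∑' n, μ ({ω | N ω = n} ∩ {ω | θ * lam ≤ ∑ i ∈ Finset.range n, T i ω})
      ≤ ∑' n, ENNReal.ofReal (Real.exp (-(a * (θ * lam))))
        * (μ {ω | N ω = n} * (ENNReal.ofReal s) ^ n) := ENNReal.tsum_le_tsum key
    _ = ENNReal.ofReal (Real.exp (-(a * (θ * lam))))
        * ∑' n, (μ {ω | N ω = n} * (ENNReal.ofReal s) ^ n) := ENNReal.tsum_mul_left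
    _ = ENNReal.ofReal (Real.exp (-(a * (θ * lam))))
        * ∑' n, ENNReal.ofReal (Real.exp (-lam) * (lam * s) ^ n / (Nat.factorial n)) := by
        congr 1
        refine tsum_congr (fun n => ?_)
        rw [hN n, ← ENNReal.ofReal_pow hs0.le, ← ENNReal.ofReal_mul (by positivity)]
        congr 1
        rw [mul_pow]
        ring
    _ = ENNReal.ofReal (Real.exp (-(a * (θ * lam))))
        * ENNReal.ofReal (∑' n : ℕ, Real.exp (-lam) * (lam * s) ^ n / (Nat.factorial n)) := by
        rw [ENNReal.ofReal_tsum_of_nonneg (fun n => by positivity)]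
        simpa [mul_div_assoc] using
          ((Real.summable_pow_div_factorial (lam * s)).mul_left (Real.exp (-lam)))
    _ = ENNReal.ofReal (Real.exp (-(a * (θ * lam))))
        * ENNReal.ofReal (Real.exp (-lam) * Real.exp (lam * s)) := by
        congr 1
        have : (∑' n : ℕ, Real.exp (-lam) * (lam * s) ^ n / (Nat.factorial n))
            = Real.exp (-lam) * ∑' n : ℕ, (lam * s) ^ n / (Nat.factorial n) := by
          rw [← tsum_mul_left]
          exact tsum_congr fun n => by ring
        rw [this]
        congr 1
        rw [Real.exp_eq_exp_ℝ, NormedSpace.exp_eq_tsum_div]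
    _ = ENNReal.ofReal (Real.exp (-lam * (s - 1) ^ 2)) := by
        rw [← ENNReal.ofReal_mul (Real.exp_nonneg _), ← Real.exp_add, ← Real.exp_add]
        congr 2
        have hsne : s ≠ 0 := hs0.ne'
        have hθs : θ = s * s := hss.symm
        rw [ha_def, hθs]
        field_simp
        ring
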